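/- arXiv:2605.20878 — 2 statements merged into one kernel-verified Lean document; each statement's English description precedes it below -/
import Mathlib

section
/- Let $K_{<t}$ be a positive semidefinite $(t-1)\times(t-1)$ matrix, $\sigma^2 d > 0$, and $\tilde{K}_{<t} = K_{<t} + \sigma^2 d\cdot I_{t-1}$. Suppose $\boldsymbol{\alpha} \in \mathbb{R}^{t-1}$, $\mathbf{k}_{<t} = K_{<t}\boldsymbol{\alpha}$, and $K_{tt} = \boldsymbol{\alpha}^\top K_{<t}\boldsymbol{\alpha}$. Then $\sigma^2 d \le K_{tt} + \sigma^2 d - \mathbf{k}_{<t}^\top \tilde{K}_{<t}^{-1}\mathbf{k}_{<t} \le \sigma^2 d (1 + \|\boldsymbol{\alpha}\|^2)$. -/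
open Matrix BigOperators

/-- Redundant-disagreement limiting case of the CIG reward: if `k₍<t₎ = K₍<t₎ α` and
`Kₜₜ = αᵀ K₍<t₎ α`, then `σ²d ≤ exp rₜ ≤ σ²d (1 + ‖α‖²)`. Here `m = t - 1` is the prefix
length and `s` the ridge `σ² d > 0`. -/
theorem stmt_8 (m : ℕ) (Kpre : Matrix (Fin m) (Fin m) ℝ) (hKpre : Kpre.PosSemidef)
    (s : ℝ) (hs : 0 < s)
    (α : Fin m → ℝ) (k : Fin m → ℝ) (hk : k = Kpre.mulVec α)
    (Ktt : ℝ) (hKtt : Ktt = dotProduct α (Kpre.mulVec α))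
    (Ktilde : Matrix (Fin m) (Fin m) ℝ)
    (hKtilde : Ktilde = Kpre + s • (1 : Matrix (Fin m) (Fin m) ℝ)) :
    s ≤ Ktt + s - dotProduct k (Ktilde⁻¹.mulVec k) ∧
      Ktt + s - dotProduct k (Ktilde⁻¹.mulVec k) ≤ s * (1 + ∑ i, (α i) ^ 2) := by
  -- `s • 1` is positive definite
  have hsone : (s • (1 : Matrix (Fin m) (Fin m) ℝ)).PosDef := by
    refine Matrix.PosDef.of_dotProduct_mulVec_pos ?_ ?_
    · show ((s • (1 : Matrix (Fin m) (Fin m) ℝ))ᴴ = _)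
      simp
    · intro x hx
      have hxx : 0 < dotProduct x x := by
        rcases lt_or_eq_of_le (Finset.sum_nonneg fun i _ => mul_self_nonneg (x i)) with h | h
        · exact h
        · exact absurd (dotProduct_self_eq_zero.mp h.symm) hx
      have : dotProduct (star x) ((s • (1 : Matrix (Fin m) (Fin m) ℝ)).mulVec x)
          = s * dotProduct x x := by
        simp [Matrix.smul_mulVec, Matrix.one_mulVec, dotProduct_smul, smul_eq_mul]
      rw [this]
      exact mul_pos hs hxx
  have hKt : Ktilde.PosDef := by
    rw [hKtilde]; exact Matrix.PosDef.posSemidef_add hKpre hsone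
  have hunit : IsUnit Ktilde.det := (Matrix.isUnit_iff_isUnit_det _).mp hKt.isUnit
  -- symmetry of Kpre dot products
  have hsym : ∀ v w : Fin m → ℝ, dotProduct v (Kpre.mulVec w) = dotProduct w (Kpre.mulVec v) := by
    intro v w
    rw [Matrix.dotProduct_mulVec, ← Matrix.mulVec_transpose]
    have hH : Kpreᵀ = Kpre := hKpre.isHermitian
    rw [hH, dotProduct_comm]
  -- β such that Ktilde β = α
  set β : Fin m → ℝ := Ktilde⁻¹.mulVec α with hβ
  have hαβ : Ktilde.mulVec β = α := by
    rw [hβ, Matrix.mulVec_mulVec, Matrix.mul_nonsing_inv _ hunit, Matrix.one_mulVec]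
  set a : Fin m → ℝ := Kpre.mulVec β with ha
  have hα : α = a + s • β := by
    rw [← hαβ, hKtilde, Matrix.add_mulVec, Matrix.smul_mulVec, Matrix.one_mulVec, ha]
  -- Ktilde⁻¹ k = a
  have hinvk : Ktilde⁻¹.mulVec k = a := by
    have h1 : Ktilde.mulVec a = k := by
      rw [hk, hα, hKtilde, Matrix.add_mulVec, Matrix.smul_mulVec, Matrix.one_mulVec,
        Matrix.mulVec_add, Matrix.mulVec_smul, ← ha]
    rw [← h1, Matrix.mulVec_mulVec, Matrix.nonsing_inv_mul _ hunit, Matrix.one_mulVec]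
  -- scalar quantities
  have hp : 0 ≤ dotProduct β a := by
    have := hKpre.dotProduct_mulVec_nonneg β
    simpa [← ha] using this
  have hq : 0 ≤ dotProduct a a := Finset.sum_nonneg fun i _ => mul_self_nonneg (a i)
  have hn : 0 ≤ dotProduct β β := Finset.sum_nonneg fun i _ => mul_self_nonneg (β i)
  have hbKa : dotProduct β (Kpre.mulVec a) = dotProduct a a := by
    rw [hsym β a, ← ha]
  -- expand Ktt
  have hKtt' : Ktt = dotProduct a (Kpre.mulVec a) + 2 * s * dotProduct a a
      + s ^ 2 * dotProduct β a := by
    rw [hKtt, hα]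
    simp only [Matrix.mulVec_add, Matrix.mulVec_smul, dotProduct_add, add_dotProduct,
      dotProduct_smul, smul_dotProduct, smul_eq_mul, ← ha]
    rw [hbKa]
    ring
  -- expand k ⬝ Ktilde⁻¹ k
  have hkk : dotProduct k (Ktilde⁻¹.mulVec k) = dotProduct a (Kpre.mulVec a)
      + s * dotProduct a a := by
    rw [hinvk, hk, dotProduct_comm, hsym a α, hα]
    simp only [Matrix.mulVec_add, Matrix.mulVec_smul, dotProduct_add, add_dotProduct,
      dotProduct_smul, smul_dotProduct, smul_eq_mul, ← ha]
    rw [hbKa]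
  -- expand ‖α‖²
  have hA : (∑ i, (α i) ^ 2) = dotProduct a a + 2 * s * dotProduct β a
      + s ^ 2 * dotProduct β β := by
    have h0 : (∑ i, (α i) ^ 2) = dotProduct α α := by
      simp [dotProduct, sq]
    rw [h0, hα]
    simp only [dotProduct_add, add_dotProduct, dotProduct_smul, smul_dotProduct,
      Pi.smul_apply, smul_eq_mul]
    rw [dotProduct_comm a β]
    ring
  constructor
  · rw [hKtt', hkk]
    nlinarith [mul_nonneg hs.le hq, mul_nonneg (sq_nonneg s) hp]
  · rw [hKtt', hkk, hA]
    nlinarith [mul_nonneg (sq_nonneg s) hp,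
      mul_nonneg (mul_nonneg (mul_nonneg hs.le hs.le) hs.le) hn]
end

section
/- Under the hypotheses of the frontier-inactivity bound, with $r_t^{\mathrm{diag}} = \log(K_{tt} + \sigma^2 d)$ and $r_t = \log(K_{tt} + \sigma^2 d - \mathbf{k}_{<t}^\top \tilde{K}_{<t}^{-1}\mathbf{k}_{<t})$, if $(t-1)\epsilon^2 < 1$ then $0 \le r_t^{\mathrm{diag}} - r_t \le -\log(1 - (t-1)\epsilon^2)$. -/
open Matrix

/-- Frontier-inactivity bound: with `r_t^diag = log(Kₜₜ + σ²d)` and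
`r_t = log(Kₜₜ + σ²d - k₍<t₎ᵀ K̃₍<t₎⁻¹ k₍<t₎)`, if `(t-1)ε² < 1` then
`0 ≤ r_t^diag - r_t ≤ -log(1 - (t-1)ε²)`. Indices are 0-based, so `(t : ℕ)` is the
paper's `t - 1`. -/
theorem stmt_13 (T : ℕ) (K : Matrix (Fin T) (Fin T) ℝ) (hK : K.PosSemidef)
    (s : ℝ) (hs : 0 < s)
    (ε : ℝ) (hε : IsGreatest (Set.range fun i : Fin T => K i i / s) ε)
    (t : Fin T)
    (Ktilde : Matrix (Fin (t : ℕ)) (Fin (t : ℕ)) ℝ)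
    (hKtilde : Ktilde = fun i j =>
      (K + s • (1 : Matrix (Fin T) (Fin T) ℝ)) (i.castLE t.isLt.le) (j.castLE t.isLt.le))
    (k : Fin (t : ℕ) → ℝ) (hk : k = fun j => K (j.castLE t.isLt.le) t)
    (hsmall : ((t : ℕ) : ℝ) * ε ^ 2 < 1)
    (rdiag r : ℝ)
    (hrdiag : rdiag = Real.log (K t t + s))
    (hr : r = Real.log (K t t + s - dotProduct k (Ktilde⁻¹.mulVec k))) :
    0 ≤ rdiag - r ∧ rdiag - r ≤ -Real.log (1 - ((t : ℕ) : ℝ) * ε ^ 2) := by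
  set f : Fin (t : ℕ) → Fin T := Fin.castLE t.isLt.le with hf
  -- basic facts
  have hsym : ∀ a b : Fin T, K a b = K b a := fun a b => by
    have := hK.1; rw [Matrix.IsHermitian] at this
    conv_lhs => rw [← this]
    simp [Matrix.conjTranspose_apply]
  have hdiag : ∀ i : Fin T, 0 ≤ K i i := by
    intro i
    have h := hK.dotProduct_mulVec_nonneg (Pi.single i 1 : Fin T → ℝ)
    simpa [Matrix.mulVec_single, single_dotProduct] using h
  have hcs2 : ∀ i j : Fin T, K i j ^ 2 ≤ K i i * K j j := by
    intro i j
    have hq : ∀ x : ℝ, 0 ≤ K i i * (x * x) + (2 * K i j) * x + K j j := by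
      intro x
      have h := hK.dotProduct_mulVec_nonneg (x • (Pi.single i 1 : Fin T → ℝ) + (Pi.single j 1 : Fin T → ℝ))
      simp only [Matrix.mulVec_add, Matrix.mulVec_smul, dotProduct_add,
        add_dotProduct, smul_dotProduct, dotProduct_smul,
        Matrix.mulVec_single, single_dotProduct, dotProduct_single,
        star_trivial, smul_eq_mul, mul_one, one_mul, Matrix.col_apply, MulOpposite.op_one, one_smul] at h
      rw [hsym j i] at h
      ring_nf at h ⊢
      linarith [h]
    have := discrim_le_zero hq
    rw [discrim] at this
    nlinarith
  have hεub : ∀ i : Fin T, K i i ≤ ε * s := by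
    intro i
    have := hε.2 ⟨i, rfl⟩
    calc K i i = (K i i / s) * s := by field_simp
    _ ≤ ε * s := by apply mul_le_mul_of_nonneg_right this hs.le
  have hε0 : 0 ≤ ε := le_trans (div_nonneg (hdiag t) hs.le) (hε.2 ⟨t, rfl⟩)
  -- Ktilde decomposition and positive definiteness
  have hM : Ktilde = K.submatrix f f + s • (1 : Matrix (Fin (t : ℕ)) (Fin (t : ℕ)) ℝ) := by
    ext i j
    by_cases h : i = j
    · subst h; simp [hKtilde, Matrix.one_apply, Matrix.submatrix_apply]
    · have hfij : f i ≠ f j := fun hc => h (Fin.castLE_injective _ hc)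
      simp [hKtilde, Matrix.one_apply, Matrix.submatrix_apply, h, hfij]
  have hsone : (s • (1 : Matrix (Fin (t : ℕ)) (Fin (t : ℕ)) ℝ)).PosDef := by
    have h1 : (s • (1 : Matrix (Fin (t : ℕ)) (Fin (t : ℕ)) ℝ))
        = Matrix.diagonal (fun _ => s) := by
      ext i j; by_cases h : i = j <;> simp [Matrix.one_apply, Matrix.diagonal_apply, h]
    rw [h1]
    exact Matrix.posDef_diagonal_iff.mpr (fun _ => hs)
  have hsub : (K.submatrix f f).PosSemidef := hK.submatrix f
  have hMpd : Ktilde.PosDef := by rw [hM]; exact Matrix.PosDef.posSemidef_add hsub hsone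
  -- the quadratic quantity q
  set y : Fin (t : ℕ) → ℝ := Ktilde⁻¹.mulVec k with hy
  set q : ℝ := dotProduct k y with hqdef
  have hky : Ktilde.mulVec y = k := by
    rw [hy, Matrix.mulVec_mulVec, Matrix.mul_nonsing_inv _ hMpd.det_pos.ne'.isUnit,
      Matrix.one_mulVec]
  have hq_eq : q = dotProduct y (Ktilde.mulVec y) := by
    rw [hky, hqdef, dotProduct_comm]
  have hq0 : 0 ≤ q := by
    rw [hq_eq]
    simpa [star_trivial] using hMpd.posSemidef.dotProduct_mulVec_nonneg y
  have hyy : s * dotProduct y y ≤ q := by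
    rw [hq_eq, hM, Matrix.add_mulVec, dotProduct_add]
    have h1 : 0 ≤ dotProduct y ((K.submatrix f f).mulVec y) := by
      simpa [star_trivial] using hsub.dotProduct_mulVec_nonneg y
    have h2 : dotProduct y ((s • (1 : Matrix (Fin (t : ℕ)) (Fin (t : ℕ)) ℝ)).mulVec y)
        = s * dotProduct y y := by
      rw [Matrix.smul_mulVec, Matrix.one_mulVec, dotProduct_smul, smul_eq_mul]
    rw [h2]; linarith
  -- bound on k ⬝ᵥ k
  have hkk0 : 0 ≤ dotProduct k k := by
    rw [dotProduct]
    exact Finset.sum_nonneg fun i _ => mul_self_nonneg _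
  have hkk : dotProduct k k ≤ ((t : ℕ) : ℝ) * (ε * s) ^ 2 := by
    rw [dotProduct]
    have : ∀ j ∈ Finset.univ, k j * k j ≤ (ε * s) ^ 2 := by
      intro j _
      rw [hk]
      have h1 := hcs2 (f j) t
      have h2 := hεub (f j)
      have h3 := hεub t
      have h4 := hdiag (f j)
      have h5 := hdiag t
      have hεs : 0 ≤ ε * s := mul_nonneg hε0 hs.le
      nlinarith [h1, mul_le_mul h2 h3 h5 hεs]
    calc ∑ j, k j * k j ≤ ∑ _j : Fin (t : ℕ), (ε * s) ^ 2 := Finset.sum_le_sum this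
    _ = ((t : ℕ) : ℝ) * (ε * s) ^ 2 := by
        rw [Finset.sum_const, Finset.card_univ, Fintype.card_fin, nsmul_eq_mul]
  -- Cauchy–Schwarz
  have hCS : q ^ 2 ≤ dotProduct k k * dotProduct y y := by
    have := Finset.sum_mul_sq_le_sq_mul_sq Finset.univ k y
    simpa [hqdef, dotProduct, pow_two] using this
  have hqkk : s * q ≤ dotProduct k k := by
    nlinarith [mul_le_mul_of_nonneg_left hyy hkk0, mul_le_mul_of_nonneg_left hCS hs.le,
      hq0, hkk0, hs]
  -- final bound on q
  have htε0 : 0 ≤ ((t : ℕ) : ℝ) * ε ^ 2 := mul_nonneg (Nat.cast_nonneg _) (sq_nonneg _)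
  have hqb : q ≤ ((t : ℕ) : ℝ) * ε ^ 2 * (K t t + s) := by
    have h1 : s * q ≤ ((t : ℕ) : ℝ) * ε ^ 2 * s * s := by
      calc s * q ≤ dotProduct k k := hqkk
      _ ≤ ((t : ℕ) : ℝ) * (ε * s) ^ 2 := hkk
      _ = ((t : ℕ) : ℝ) * ε ^ 2 * s * s := by ring
    have h2 : q ≤ ((t : ℕ) : ℝ) * ε ^ 2 * s := by
      have := (mul_le_mul_iff_right₀ hs).mp (by linarith : s * q ≤ s * (((t : ℕ) : ℝ) * ε ^ 2 * s))
      linarith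
    nlinarith [hdiag t, htε0]
  -- wrap up with logarithms
  set A : ℝ := K t t + s with hAdef
  have hA : 0 < A := by have := hdiag t; simp only [hAdef]; linarith
  have hfac : 0 < 1 - ((t : ℕ) : ℝ) * ε ^ 2 := by linarith
  have hAq : A * (1 - ((t : ℕ) : ℝ) * ε ^ 2) ≤ A - q := by nlinarith
  have hAqpos : 0 < A - q := lt_of_lt_of_le (by positivity) hAq
  have hAqA : A - q ≤ A := by linarith
  constructor
  · rw [hrdiag, hr]
    have := Real.log_le_log hAqpos hAqA
    linarith
  · rw [hrdiag, hr]
    have hlog : Real.log (A * (1 - ((t : ℕ) : ℝ) * ε ^ 2)) ≤ Real.log (A - q) :=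
      Real.log_le_log (by positivity) hAq
    rw [Real.log_mul hA.ne' hfac.ne'] at hlog
    linarith
end
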